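/- The uniquely closable typable Motzkin trees of size 3n+1 (under the size definition {binary node a = 2, unary node l = 1, leaf v = 0}) are in bijection with binary trees having n binary nodes: the map replacing every terminal subtree l(v) by the leaf v is a bijection from the set of uniquely closable typable skeletons of size 3n+1 onto the set of l-free Motzkin trees with n binary a-nodes. Consequently the number of uniquely closable typable skeletons of size 3n+1 equals the n-th Catalan number, and there are no uniquely closable typable skeletons of size not congruent to 1 modulo 3. -/

import Mathlib

/-- Motzkin trees (binary-unary trees): leaf `v`, unary `l`, binary `a`. -/
inductive Mot : Type
  | v : Mot
  | l : Mot → Mot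
  | a : Mot → Mot → Mot
deriving DecidableEq

/-- Lambda terms in de Bruijn form. -/
inductive Lam : Type
  | v : Nat → Lam
  | l : Lam → Lam
  | a : Lam → Lam → Lam
deriving DecidableEq

/-- `t` is closed at depth `d`. -/
def Lam.closedAt : Lam → Nat → Prop
  | .v i, d => i < d
  | .l t, d => t.closedAt (d + 1)
  | .a s t, d => s.closedAt d ∧ t.closedAt d

/-- The Motzkin-tree skeleton of a de Bruijn term. -/
def Lam.skel : Lam → Mot
  | .v _ => .v
  | .l t => .l t.skel
  | .a s t => .a s.skel t.skel

/-- A Motzkin tree is uniquely closable if exactly one closed term has it as skeleton. -/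
def Mot.UniquelyClosable (X : Mot) : Prop := ∃! t : Lam, t.closedAt 0 ∧ t.skel = X

/-- A Motzkin tree contains no unary node `l`. -/
def Mot.LFree : Mot → Prop
  | .v => True
  | .l _ => False
  | .a s t => s.LFree ∧ t.LFree

/-- Simple types: base type `o` and arrow types. -/
inductive Ty : Type
  | o : Ty
  | arr : Ty → Ty → Ty
deriving DecidableEq

/-- Typing judgment `Γ ⊢ t : A` for de Bruijn terms. -/
inductive HasTy : List Ty → Lam → Ty → Prop
  | var (Γ : List Ty) (i : ℕ) (A : Ty) : Γ[i]? = some A → HasTy Γ (.v i) A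
  | lam (Γ : List Ty) (t : Lam) (A B : Ty) :
      HasTy (A :: Γ) t B → HasTy Γ (.l t) (.arr A B)
  | app (Γ : List Ty) (s t : Lam) (A B : Ty) :
      HasTy Γ s (.arr A B) → HasTy Γ t A → HasTy Γ (.a s t) B

/-- A Motzkin tree is typable if some closed simply-typed term has it as skeleton. -/
def Mot.Typable (X : Mot) : Prop :=
  ∃ (t : Lam) (A : Ty), t.closedAt 0 ∧ HasTy [] t A ∧ t.skel = X

/-- Size with binary node = 2, unary node = 1, leaf = 0. -/
def Mot.size : Mot → ℕ
  | .v => 0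
  | .l t => 1 + t.size
  | .a s t => 2 + s.size + t.size

/-- Number of binary `a` nodes. -/
def Mot.aCount : Mot → ℕ
  | .v => 0
  | .l t => t.aCount
  | .a s t => 1 + s.aCount + t.aCount

/-- Replace every terminal subtree `l(v)` by the leaf `v`. -/
def Mot.collapse : Mot → Mot
  | .v => .v
  | .l .v => .v
  | .l t => .l t.collapse
  | .a s t => .a s.collapse t.collapse

/-- Leaves all at lambda-depth exactly 1. -/
def dOK : Mot → Nat → Prop
  | .v, d => d = 1
  | .l t, d => dOK t (d + 1)
  | .a s t, d => dOK s d ∧ dOK t d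

lemma dOK_le : ∀ (X : Mot) (d : ℕ), dOK X d → d ≤ 1 := by
  intro X
  induction X with
  | v => intro d h; simp [dOK] at h; omega
  | l t ih => intro d h; have := ih (d + 1) h; omega
  | a s t ihs iht => intro d h; exact ihs d h.1

lemma dOK_lfree : ∀ (X : Mot), dOK X 1 → X.LFree := by
  intro X
  induction X with
  | v => intro _; trivial
  | l t ih => intro h; have := dOK_le t 2 h; omega
  | a s t ihs iht => intro h; exact ⟨ihs h.1, iht h.2⟩

/-- Canonical term: all leaves are variable 0. -/
def F : Mot → Lam
  | .v => .v 0
  | .l t => .l (F t)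
  | .a s t => .a (F s) (F t)

lemma skel_F (X : Mot) : (F X).skel = X := by
  induction X with
  | v => rfl
  | l t ih => simp [F, Lam.skel, ih]
  | a s t ihs iht => simp [F, Lam.skel, ihs, iht]

lemma closed_F : ∀ (X : Mot) (d : ℕ), dOK X d → (F X).closedAt d := by
  intro X
  induction X with
  | v => intro d h; simp [dOK] at h; simp [F, Lam.closedAt, h]
  | l t ih => intro d h; exact ih (d + 1) h
  | a s t ihs iht => intro d h; exact ⟨ihs d h.1, iht d h.2⟩

lemma unique_F : ∀ (X : Mot) (t : Lam) (d : ℕ),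
    t.closedAt d → t.skel = X → dOK X d → t = F X := by
  intro X
  induction X with
  | v =>
    intro t d hc hs hd
    cases t with
    | v i =>
      simp [dOK] at hd
      simp [Lam.closedAt, hd] at hc
      simp [F]; omega
    | l t => simp [Lam.skel] at hs
    | a s t => simp [Lam.skel] at hs
  | l Y ih =>
    intro t d hc hs hd
    cases t with
    | v i => simp [Lam.skel] at hs
    | l s =>
      simp [Lam.skel] at hs
      simp [F]
      exact ih s (d + 1) hc hs hd
    | a s u => simp [Lam.skel] at hs
  | a Y Z ihY ihZ =>
    intro t d hc hs hd
    cases t with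
    | v i => simp [Lam.skel] at hs
    | l s => simp [Lam.skel] at hs
    | a s u =>
      simp [Lam.skel] at hs
      simp [F]
      exact ⟨ihY s d hc.1 hs.1 hd.1, ihZ u d hc.2 hs.2 hd.2⟩

lemma existsNeTerm : ∀ (t : Lam) (d : ℕ), t.closedAt d → ¬ dOK t.skel d →
    ∃ t', t'.closedAt d ∧ t'.skel = t.skel ∧ t' ≠ t := by
  intro t
  induction t with
  | v i =>
    intro d hc hd
    simp [Lam.skel, dOK] at hd
    have hi : i < d := hc
    refine ⟨.v (if i = 0 then 1 else 0), ?_, rfl, ?_⟩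
    · simp [Lam.closedAt]; split <;> omega
    · split <;> simp_all <;> omega
  | l s ih =>
    intro d hc hd
    obtain ⟨s', h1, h2, h3⟩ := ih (d + 1) hc hd
    exact ⟨.l s', h1, by simp [Lam.skel, h2], by simp [h3]⟩
  | a s u ihs ihu =>
    intro d hc hd
    by_cases h : dOK s.skel d
    · have hu : ¬ dOK u.skel d := fun h2 => hd ⟨h, h2⟩
      obtain ⟨u', h1, h2, h3⟩ := ihu d hc.2 hu
      exact ⟨.a s u', ⟨hc.1, h1⟩, by simp [Lam.skel, h2], by simp [h3]⟩
    · obtain ⟨s', h1, h2, h3⟩ := ihs d hc.1 h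
      exact ⟨.a s' u, ⟨h1, hc.2⟩, by simp [Lam.skel, h2], by simp [h3]⟩

lemma uc_iff_dOK (X : Mot) : X.UniquelyClosable ↔ dOK X 0 := by
  constructor
  · rintro ⟨t, ⟨hc, hs⟩, huniq⟩
    by_contra h
    rw [← hs] at h
    obtain ⟨t', h1, h2, h3⟩ := existsNeTerm t 0 hc h
    exact h3 (huniq t' ⟨h1, h2.trans hs⟩)
  · intro h
    exact ⟨F X, ⟨closed_F X 0 h, skel_F X⟩, fun t ⟨hc, hs⟩ => unique_F X t 0 hc hs h⟩

lemma ty_ne : ∀ (D C : Ty), D ≠ Ty.arr D C := by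
  intro D
  induction D with
  | o => intro C h; exact Ty.noConfusion h
  | arr a b iha ihb =>
    intro C h
    injection h with h1 h2
    exact iha b h1

lemma key : ∀ (s : Lam) (B C : Ty), HasTy [B] s C → s.skel.LFree → s.skel = .v := by
  intro s
  induction s with
  | v i => intros; rfl
  | l t ih => intro B C h hl; exact absurd hl (by simp [Lam.skel, Mot.LFree])
  | a s u ihs ihu =>
    intro B C h hl
    cases h with
    | app _ _ _ D _ hs hu =>
      have es := ihs B _ hs hl.1
      have eu := ihu B _ hu hl.2
      have hsv : ∃ i, s = .v i := by
        cases s <;> simp [Lam.skel] at es ⊢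
      have huv : ∃ j, u = .v j := by
        cases u <;> simp [Lam.skel] at eu ⊢
      obtain ⟨i, rfl⟩ := hsv
      obtain ⟨j, rfl⟩ := huv
      cases hs with
      | var _ _ _ hget =>
        cases hu with
        | var _ _ _ hget2 =>
          match i, hget with
          | 0, hget =>
            match j, hget2 with
            | 0, hget2 =>
              simp at hget hget2
              rw [← hget2] at hget
              exact absurd hget (ty_ne B C)
            | j + 1, hget2 => simp at hget2
          | i + 1, hget => simp at hget

/-- Trees built from `l(v)` by binary nodes. -/
inductive Good : Mot → Prop
  | base : Good (.l .v)
  | node {s t : Mot} : Good s → Good t → Good (.a s t)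

lemma good_of : ∀ (t : Lam) (A : Ty), HasTy [] t A → dOK t.skel 0 → Good t.skel := by
  intro t
  induction t with
  | v i => intro A h hd; simp [Lam.skel, dOK] at hd
  | l s ih =>
    intro A h hd
    cases h with
    | lam _ _ B C hs =>
      have hd1 : dOK s.skel 1 := hd
      have hl := dOK_lfree s.skel hd1
      have := key s B C hs hl
      show Good (.l s.skel)
      rw [this]
      exact Good.base
  | a s u ihs ihu =>
    intro A h hd
    cases h with
    | app _ _ _ D _ hs hu => exact Good.node (ihs _ hs hd.1) (ihu _ hu hd.2)

lemma dOK_of_good : ∀ {X : Mot}, Good X → dOK X 0 := by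
  intro X h
  induction h with
  | base => simp [dOK]
  | node hs ht ihs iht => exact ⟨ihs, iht⟩

lemma hasTy_F : ∀ {X : Mot}, Good X → ∀ A : Ty, HasTy [] (F X) (Ty.arr A A) := by
  intro X h
  induction h with
  | base => intro A; exact HasTy.lam _ _ A A (HasTy.var _ 0 A rfl)
  | node hs ht ihs iht =>
    intro A
    exact HasTy.app _ _ _ (Ty.arr A A) (Ty.arr A A) (ihs (Ty.arr A A)) (iht A)

lemma char (X : Mot) : X.UniquelyClosable ∧ X.Typable ↔ Good X := by
  constructor
  · rintro ⟨huc, t, A, hc, ht, hs⟩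
    have hd : dOK t.skel 0 := by rw [hs]; exact (uc_iff_dOK X).mp huc
    have := good_of t A ht hd
    rwa [hs] at this
  · intro h
    refine ⟨(uc_iff_dOK X).mpr (dOK_of_good h), F X, Ty.arr .o .o, ?_, hasTy_F h .o, skel_F X⟩
    exact closed_F X 0 (dOK_of_good h)

/-- Expansion: replace each leaf by `l(v)`. -/
def E : Mot → Mot
  | .v => .l .v
  | .l _ => .l .v
  | .a s t => .a (E s) (E t)

lemma good_E : ∀ (Y : Mot), Y.LFree → Good (E Y) := by
  intro Y
  induction Y with
  | v => intro _; exact Good.base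
  | l t ih => intro h; exact absurd h (by simp [Mot.LFree])
  | a s t ihs iht => intro h; exact Good.node (ihs h.1) (iht h.2)

lemma collapse_E : ∀ (Y : Mot), Y.LFree → (E Y).collapse = Y := by
  intro Y
  induction Y with
  | v => intro _; rfl
  | l t ih => intro h; exact absurd h (by simp [Mot.LFree])
  | a s t ihs iht => intro h; simp [E, Mot.collapse, ihs h.1, iht h.2]

lemma E_collapse : ∀ {X : Mot}, Good X → E X.collapse = X := by
  intro X h
  induction h with
  | base => rfl
  | node hs ht ihs iht => simp [Mot.collapse, E, ihs, iht]

lemma lfree_collapse : ∀ {X : Mot}, Good X → X.collapse.LFree := by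
  intro X h
  induction h with
  | base => trivial
  | node hs ht ihs iht => exact ⟨by simpa [Mot.collapse] using ihs, by simpa [Mot.collapse] using iht⟩

lemma aCount_collapse : ∀ {X : Mot}, Good X → X.collapse.aCount = X.aCount := by
  intro X h
  induction h with
  | base => rfl
  | node hs ht ihs iht => simp [Mot.collapse, Mot.aCount, ihs, iht]

lemma size_good : ∀ {X : Mot}, Good X → X.size = 3 * X.aCount + 1 := by
  intro X h
  induction h with
  | base => rfl
  | node hs ht ihs iht => simp [Mot.size, Mot.aCount, ihs, iht]; ring

lemma aCount_E : ∀ (Y : Mot), Y.LFree → (E Y).aCount = Y.aCount := by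
  intro Y
  induction Y with
  | v => intro _; rfl
  | l t ih => intro h; exact absurd h (by simp [Mot.LFree])
  | a s t ihs iht => intro h; simp [E, Mot.aCount, ihs h.1, iht h.2]

/- binary trees vs l-free Motzkin trees -/
def ofTree : Tree Unit → Mot
  | .nil => .v
  | .node _ s t => .a (ofTree s) (ofTree t)

def toTree : Mot → Tree Unit
  | .v => .nil
  | .l _ => .nil
  | .a s t => .node () (toTree s) (toTree t)

lemma lfree_ofTree : ∀ (T : Tree Unit), (ofTree T).LFree := by
  intro T
  induction T with
  | nil => trivial
  | node _ s t ihs iht => exact ⟨ihs, iht⟩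

lemma toTree_ofTree : ∀ (T : Tree Unit), toTree (ofTree T) = T := by
  intro T
  induction T with
  | nil => rfl
  | node _ s t ihs iht => simp [ofTree, toTree, ihs, iht]

lemma ofTree_toTree : ∀ (Y : Mot), Y.LFree → ofTree (toTree Y) = Y := by
  intro Y
  induction Y with
  | v => intro _; rfl
  | l t ih => intro h; exact absurd h (by simp [Mot.LFree])
  | a s t ihs iht => intro h; simp [toTree, ofTree, ihs h.1, iht h.2]

lemma numNodes_toTree : ∀ (Y : Mot), Y.LFree → (toTree Y).numNodes = Y.aCount := by
  intro Y
  induction Y with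
  | v => intro _; rfl
  | l t ih => intro h; exact absurd h (by simp [Mot.LFree])
  | a s t ihs iht =>
    intro h
    simp [toTree, Mot.aCount, Tree.numNodes, ihs h.1, iht h.2]
    omega

theorem stmt18 (n : ℕ) :
    Set.BijOn Mot.collapse
      {X : Mot | X.UniquelyClosable ∧ X.Typable ∧ X.size = 3 * n + 1}
      {Y : Mot | Y.LFree ∧ Y.aCount = n} ∧
    Nat.card {X : Mot // X.UniquelyClosable ∧ X.Typable ∧ X.size = 3 * n + 1} =
      catalan n ∧
    ∀ k : ℕ, k % 3 ≠ 1 → ¬∃ X : Mot, X.UniquelyClosable ∧ X.Typable ∧ X.size = k := by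
  have hmem : ∀ X : Mot, (X.UniquelyClosable ∧ X.Typable ∧ X.size = 3 * n + 1) ↔
      (Good X ∧ X.aCount = n) := by
    intro X
    constructor
    · rintro ⟨h1, h2, h3⟩
      have hg := (char X).mp ⟨h1, h2⟩
      have := size_good hg
      exact ⟨hg, by omega⟩
    · rintro ⟨hg, hn⟩
      obtain ⟨h1, h2⟩ := (char X).mpr hg
      exact ⟨h1, h2, by rw [size_good hg, hn]⟩
  refine ⟨⟨?_, ?_, ?_⟩, ?_, ?_⟩
  · -- MapsTo
    intro X hX
    obtain ⟨hg, hn⟩ := (hmem X).mp hX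
    exact ⟨lfree_collapse hg, by rw [aCount_collapse hg, hn]⟩
  · -- InjOn
    intro X hX X' hX' heq
    have hg := ((hmem X).mp hX).1
    have hg' := ((hmem X').mp hX').1
    rw [← E_collapse hg, ← E_collapse hg', heq]
  · -- SurjOn
    intro Y hY
    obtain ⟨hl, hn⟩ := hY
    refine ⟨E Y, (hmem (E Y)).mpr ⟨good_E Y hl, by rw [aCount_E Y hl, hn]⟩, collapse_E Y hl⟩
  · -- cardinality
    have e1 : {X : Mot // X.UniquelyClosable ∧ X.Typable ∧ X.size = 3 * n + 1} ≃
        {Y : Mot // Y.LFree ∧ Y.aCount = n} := by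
      refine ⟨fun ⟨X, hX⟩ => ⟨X.collapse, ?_⟩, fun ⟨Y, hY⟩ => ⟨E Y, ?_⟩, ?_, ?_⟩
      · obtain ⟨hg, hn⟩ := (hmem X).mp hX
        exact ⟨lfree_collapse hg, by rw [aCount_collapse hg, hn]⟩
      · exact (hmem (E Y)).mpr ⟨good_E Y hY.1, by rw [aCount_E Y hY.1, hY.2]⟩
      · rintro ⟨X, hX⟩
        simp only [Subtype.mk.injEq]
        exact E_collapse ((hmem X).mp hX).1
      · rintro ⟨Y, hY⟩
        simp only [Subtype.mk.injEq]
        exact collapse_E Y hY.1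
    have e2 : {Y : Mot // Y.LFree ∧ Y.aCount = n} ≃
        {T : Tree Unit // T.numNodes = n} := by
      refine ⟨fun ⟨Y, hY⟩ => ⟨toTree Y, by rw [numNodes_toTree Y hY.1, hY.2]⟩,
        fun ⟨T, hT⟩ => ⟨ofTree T, lfree_ofTree T, ?_⟩, ?_, ?_⟩
      · rw [← numNodes_toTree (ofTree T) (lfree_ofTree T), toTree_ofTree, hT]
      · rintro ⟨Y, hY⟩
        simp only [Subtype.mk.injEq]
        exact ofTree_toTree Y hY.1
      · rintro ⟨T, hT⟩
        simp only [Subtype.mk.injEq]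
        exact toTree_ofTree T
    have e3 : {T : Tree Unit // T.numNodes = n} ≃ (BinaryTree.treesOfNumNodesEq n) :=
      (Equiv.subtypeEquivRight (fun T => (BinaryTree.mem_treesOfNumNodesEq).symm))
    rw [Nat.card_congr ((e1.trans e2).trans e3), Nat.card_eq_finsetCard,
      BinaryTree.treesOfNumNodesEq_card_eq_catalan]
  · -- no skeletons of size not ≡ 1 mod 3
    rintro k hk ⟨X, h1, h2, h3⟩
    have hg := (char X).mp ⟨h1, h2⟩
    have := size_good hg
    omega
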